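/- Let 𝒜 be a trim ℕ-automaton computing g : A* → ℕ. Then g is bounded (i.e. g(w) = O(1)) if and only if 𝒜 contains neither a heavy cycle on some state nor a barbell from some state q to some state q' ≠ q. -/

import Mathlib

set_option autoImplicit false

/-! ### Asymptotic growth of functions `A* → ℕ` -/

/-- `g` has `k`-polynomial growth: `g(w) = O(|w|^k)` and there is an infinite set `L`
of words on which `g(w) = Ω(|w|^k)`. -/
def PolyGrowth {A : Type} (g : List A → ℕ) (k : ℕ) : Prop :=
  (∃ C : ℕ, ∀ w, g w ≤ C * w.length ^ k + C) ∧
  (∃ L : Set (List A), L.Infinite ∧ ∃ c : ℕ, 0 < c ∧ ∀ w ∈ L, w.length ^ k ≤ c * g w)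

/-- `g` has exponential growth: `g(w) = 2^{O(|w|)}` and there is an infinite set `L`
of words on which `g(w) = 2^{Ω(|w|)}`. -/
def ExpGrowth {A : Type} (g : List A → ℕ) : Prop :=
  (∃ C : ℕ, ∀ w, g w ≤ 2 ^ (C * w.length + C)) ∧
  (∃ L : Set (List A), L.Infinite ∧ ∃ c : ℕ, 0 < c ∧ ∀ w ∈ L, 2 ^ w.length ≤ (g w) ^ c)

/-! ### Substitutions -/

/-- Extension of a substitution `s : X → (B ⊎ X)*` to a morphism on `(B ⊎ X)*`
fixing the letters of `B`; this also gives the composition of substitutions,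
`(s₁ ∘ s₂) x = applySubst s₁ (s₂ x)`. -/
def applySubst {B X : Type} (s : X → List (B ⊕ X)) (l : List (B ⊕ X)) : List (B ⊕ X) :=
  l.flatMap (fun c => match c with | Sum.inl b => [Sum.inl b] | Sum.inr x => s x)

/-- Evaluation of a word over `B ⊎ X` under a valuation `v : X → B*` of the registers. -/
def evalSubst {B X : Type} (v : X → List B) (l : List (B ⊕ X)) : List B :=
  l.flatMap (fun c => match c with | Sum.inl b => [b] | Sum.inr x => v x)

/-- Number of occurrences of register `x` in a word over `B ⊎ X`. -/
noncomputable def occCount {B X : Type} (x : X) (l : List (B ⊕ X)) : ℕ :=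
  l.countP (fun c => @decide (c = Sum.inr x) (Classical.propDecidable _))

/-- Total number of occurrences of register `x` in the whole set of words `{s y | y ∈ X}`. -/
noncomputable def totalOcc {B X : Type} [Fintype X] (s : X → List (B ⊕ X)) (x : X) : ℕ :=
  ∑ y : X, occCount x (s y)

/-! ### Streaming string transducers -/

/-- A streaming string transducer (SST) with input alphabet `A` and output alphabet `B`:
finitely many states `Q` with initial state `q0`, finitely many registers `X` with
initial contents `init`, a partial transition/update function (`trans`, returning the
successor state together with the register update substitution, with a common domain),
and a partial output function `out`. -/
structure SST (A B : Type) where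
  Q : Type
  X : Type
  [finQ : Fintype Q]
  [finX : Fintype X]
  q0 : Q
  init : X → List B
  trans : Q → A → Option (Q × (X → List (B ⊕ X)))
  out : Q → Option (List (B ⊕ X))

attribute [instance] SST.finQ SST.finX

/-- Run of an SST from state `q` with current register valuation `v`. -/
def SST.runFrom {A B : Type} (T : SST A B) :
    T.Q → (T.X → List B) → List A → Option (T.Q × (T.X → List B))
  | q, v, [] => some (q, v)
  | q, v, a :: w =>
    match T.trans q a with
    | none => none
    | some (q', s) => T.runFrom q' (fun x => evalSubst v (s x)) w

/-- The (partial) function computed by an SST. -/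
def SST.eval {A B : Type} (T : SST A B) (w : List A) : Option (List B) :=
  (T.runFrom T.q0 T.init w).bind fun p => (T.out p.1).map fun o => evalSubst p.2 o

def SST.Computes {A B : Type} (T : SST A B) (f : List A → Option (List B)) : Prop :=
  ∀ w, T.eval w = f w

/-- An SST is copyless if every update substitution uses each register at most once
in total. -/
def SST.Copyless {A B : Type} (T : SST A B) : Prop :=
  ∀ q a p, T.trans q a = some p → ∀ x : T.X, totalOcc p.2 x ≤ 1

/-- An SST is `k`-layered if its registers can be partitioned into layers
`X_0, …, X_k` such that every update of a register of layer `i` only uses registers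
of layers `≤ i`, and each register of layer `i` is used at most once in total in the
updates of the registers of layer `i`. -/
def SST.IsLayered {A B : Type} (T : SST A B) (k : ℕ) : Prop :=
  ∃ layer : T.X → Fin (k + 1),
    ∀ q a p, T.trans q a = some p →
      (∀ x y, Sum.inr y ∈ p.2 x → layer y ≤ layer x) ∧
      (∀ y : T.X,
        (∑ x ∈ Finset.univ.filter (fun x => layer x = layer y), occCount y (p.2 x)) ≤ 1)

/-- The composed substitution `λ(q, w)` applied along the run reading `w` from state `q`
(together with the state reached). -/
def SST.substFrom {A B : Type} (T : SST A B) :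
    T.Q → List A → Option (T.Q × (T.X → List (B ⊕ T.X)))
  | q, [] => some (q, fun x => [Sum.inr x])
  | q, a :: w =>
    match T.trans q a with
    | none => none
    | some (q', s) => (T.substFrom q' w).map fun p => (p.1, fun x => applySubst s (p.2 x))

/-- An SST is `(k,B)`-bounded if its registers can be partitioned into layers
`X_0, …, X_k` such that every update of a register of layer `i` only uses registers of
layers `≤ i`, and for every state `q` and word `w`, each register of layer `i` occurs
at most `B` times in total in `{λ(q,w)(x) | x ∈ X_i}`. -/
def SST.IsBounded {A B : Type} (T : SST A B) (k Bd : ℕ) : Prop :=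
  ∃ layer : T.X → Fin (k + 1),
    (∀ q a p, T.trans q a = some p → ∀ x y, Sum.inr y ∈ p.2 x → layer y ≤ layer x) ∧
    (∀ q w p, T.substFrom q w = some p →
      ∀ y : T.X,
        (∑ x ∈ Finset.univ.filter (fun x => layer x = layer y), occCount y (p.2 x)) ≤ Bd)

/-! ### Simple SSTs -/

/-- A simple SST: total, a single state (hence no state component), and update
substitutions and output using no letters of `B`. -/
structure SimpleSST (A B : Type) where
  X : Type
  [finX : Fintype X]
  [decX : DecidableEq X]
  init : X → List B
  upd : A → X → List X
  out : List X

attribute [instance] SimpleSST.finX SimpleSST.decX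

/-- Register valuation of a simple SST after reading a word, starting from valuation `v`. -/
def SimpleSST.valFrom {A B : Type} (T : SimpleSST A B) :
    (T.X → List B) → List A → T.X → List B
  | v, [] => v
  | v, a :: w => T.valFrom (fun x => (T.upd a x).flatMap v) w

/-- Register valuation `𝒯^w` of a simple SST after reading `w`. -/
def SimpleSST.val {A B : Type} (T : SimpleSST A B) (w : List A) : T.X → List B :=
  T.valFrom T.init w

/-- The (total) function computed by a simple SST. -/
def SimpleSST.eval {A B : Type} (T : SimpleSST A B) (w : List A) : List B :=
  (T.out).flatMap (T.val w)

/-! ### Two-way transducers -/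

/-- A tape symbol: a letter of `A` or one of the two endmarkers `⊢`, `⊣`. -/
inductive TapeSym (A : Type) where
  | lend
  | rend
  | letter (a : A)

/-- The content of the tape `⊢w⊣` at position `m ∈ {0, …, |w|+1}`. -/
def tapeAt {A : Type} (w : List A) (m : ℕ) : TapeSym A :=
  if m = 0 then TapeSym.lend
  else
    match w[m - 1]? with
    | some a => TapeSym.letter a
    | none => TapeSym.rend

/-- Head moves. -/
inductive Dir where
  | left
  | right

/-- A deterministic two-way transducer: finitely many states with an initial state and
a set of final states, and a partial transition/output function (common domain). -/
structure TwoWayT (A B : Type) where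
  Q : Type
  [finQ : Fintype Q]
  q0 : Q
  final : Set Q
  trans : Q → TapeSym A → Option ((Q × Dir) × List B)

attribute [instance] TwoWayT.finQ

/-- `TwoWayT.Steps T w c v c'`: on input `⊢w⊣` the transducer can go from
configuration `c` to configuration `c'` producing output `v`. -/
inductive TwoWayT.Steps {A B : Type} (T : TwoWayT A B) (w : List A) :
    T.Q × ℕ → List B → T.Q × ℕ → Prop
  | refl (c : T.Q × ℕ) : TwoWayT.Steps T w c [] c
  | stepL {q : T.Q} {m : ℕ} {q' : T.Q} {v u : List B} {cf : T.Q × ℕ} :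
      T.trans q (tapeAt w m) = some ((q', Dir.left), v) → 1 ≤ m →
      TwoWayT.Steps T w (q', m - 1) u cf → TwoWayT.Steps T w (q, m) (v ++ u) cf
  | stepR {q : T.Q} {m : ℕ} {q' : T.Q} {v u : List B} {cf : T.Q × ℕ} :
      T.trans q (tapeAt w m) = some ((q', Dir.right), v) → m ≤ w.length →
      TwoWayT.Steps T w (q', m + 1) u cf → TwoWayT.Steps T w (q, m) (v ++ u) cf

/-- The two-way transducer computes the partial function `f`: `f w = some v` iff there
is an accepting run on `⊢w⊣` (from `(q0, 0)` to `(q, |w|+1)` with `q` final)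
producing `v`. -/
def TwoWayT.Computes {A B : Type} (T : TwoWayT A B) (f : List A → Option (List B)) : Prop :=
  ∀ w v, f w = some v ↔ ∃ q ∈ T.final, TwoWayT.Steps T w (T.q0, 0) v (q, w.length + 1)

/-! ### Marble transducers -/

/-- Actions of a marble transducer: move left, move right, lift the marble, or drop a
marble of color `c`. -/
inductive MAct (C : Type) where
  | left
  | right
  | lift
  | drop (c : C)

/-- A deterministic marble transducer: finitely many states with an initial state and a
set of final states, finitely many marble colors `C`, and a partial transition/output
function (common domain) reading the current state, the tape symbol, and the color of
the marble at the current position (if any); on a position carrying a marble the head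
may only move left or lift the marble. -/
structure MarbleT (A B : Type) where
  Q : Type
  C : Type
  [finQ : Fintype Q]
  [finC : Fintype C]
  q0 : Q
  final : Set Q
  trans : Q → TapeSym A → Option C → Option ((Q × MAct C) × List B)
  marble_left_or_lift : ∀ q s c p, trans q s (some c) = some p →
    p.1.2 = MAct.left ∨ p.1.2 = MAct.lift

attribute [instance] MarbleT.finQ MarbleT.finC

/-- The color of the marble at position `m`, for a stack `π` of dropped marbles
(topmost first, positions strictly increasing from the top and all ≥ the head
position). -/
def marbleAt {C : Type} (m : ℕ) : List (C × ℕ) → Option C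
  | [] => none
  | (c, p) :: _ => if p = m then some c else none

/-- `MarbleT.Steps T w c v c'`: on input `⊢w⊣` the marble transducer can go from
configuration `c` to configuration `c'` producing output `v`. A configuration is a
triple (state, head position, stack of dropped marbles). -/
inductive MarbleT.Steps {A B : Type} (T : MarbleT A B) (w : List A) :
    T.Q × ℕ × List (T.C × ℕ) → List B → T.Q × ℕ × List (T.C × ℕ) → Prop
  | refl (c : T.Q × ℕ × List (T.C × ℕ)) : MarbleT.Steps T w c [] c
  | stepL {q : T.Q} {m : ℕ} {π : List (T.C × ℕ)} {q' : T.Q} {v u : List B}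
      {cf : T.Q × ℕ × List (T.C × ℕ)} :
      T.trans q (tapeAt w m) (marbleAt m π) = some ((q', MAct.left), v) → 1 ≤ m →
      MarbleT.Steps T w (q', m - 1, π) u cf → MarbleT.Steps T w (q, m, π) (v ++ u) cf
  | stepR {q : T.Q} {m : ℕ} {π : List (T.C × ℕ)} {q' : T.Q} {v u : List B}
      {cf : T.Q × ℕ × List (T.C × ℕ)} :
      marbleAt m π = none →
      T.trans q (tapeAt w m) none = some ((q', MAct.right), v) → m ≤ w.length →
      MarbleT.Steps T w (q', m + 1, π) u cf → MarbleT.Steps T w (q, m, π) (v ++ u) cf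
  | stepLift {q : T.Q} {m : ℕ} {π : List (T.C × ℕ)} {q' : T.Q} {cc : T.C} {v u : List B}
      {cf : T.Q × ℕ × List (T.C × ℕ)} :
      T.trans q (tapeAt w m) (some cc) = some ((q', MAct.lift), v) →
      MarbleT.Steps T w (q', m, π) u cf →
      MarbleT.Steps T w (q, m, (cc, m) :: π) (v ++ u) cf
  | stepDrop {q : T.Q} {m : ℕ} {π : List (T.C × ℕ)} {q' : T.Q} {cc : T.C} {v u : List B}
      {cf : T.Q × ℕ × List (T.C × ℕ)} :
      marbleAt m π = none →
      T.trans q (tapeAt w m) none = some ((q', MAct.drop cc), v) →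
      MarbleT.Steps T w (q', m, (cc, m) :: π) u cf →
      MarbleT.Steps T w (q, m, π) (v ++ u) cf

/-- The marble transducer computes the partial function `f`: `f w = some v` iff there is
an accepting run on `⊢w⊣` (from `(q0, 0, ε)` to `(q, |w|+1, ε)` with `q` final)
producing `v`. -/
def MarbleT.Computes {A B : Type} (T : MarbleT A B) (f : List A → Option (List B)) : Prop :=
  ∀ w v, f w = some v ↔
    ∃ q ∈ T.final, MarbleT.Steps T w (T.q0, 0, []) v (q, w.length + 1, [])

/-- A `k`-marble transducer: every configuration reachable from the initial
configuration carries at most `k` marbles. -/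
def MarbleT.IsKMarble {A B : Type} (T : MarbleT A B) (k : ℕ) : Prop :=
  ∀ (w : List A) (u : List B) (cfg : T.Q × ℕ × List (T.C × ℕ)),
    MarbleT.Steps T w (T.q0, 0, []) u cfg → cfg.2.2.length ≤ k

/-- `f` is computable by a `k`-marble transducer. -/
def ComputableKMarble {A B : Type} (f : List A → List B) (k : ℕ) : Prop :=
  ∃ T : MarbleT A B, T.IsKMarble k ∧ T.Computes (fun w => some (f w))

/-! ### Matrices over ℕ and ℕ-automata -/

/-- Product of two square matrices over `ℕ` (given as functions). -/
def matMul {Q : Type} [Fintype Q] (M N : Q → Q → ℕ) : Q → Q → ℕ :=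
  fun i j => ∑ x : Q, M i x * N x j

/-- Identity matrix over `ℕ`. -/
def matId {Q : Type} [DecidableEq Q] : Q → Q → ℕ :=
  fun i j => if i = j then 1 else 0

/-- Row vector times matrix. -/
def vecMat {Q : Type} [Fintype Q] (v : Q → ℕ) (M : Q → Q → ℕ) : Q → ℕ :=
  fun j => ∑ x : Q, v x * M x j

/-- Matrix times column vector. -/
def matVec {Q : Type} [Fintype Q] (M : Q → Q → ℕ) (v : Q → ℕ) : Q → ℕ :=
  fun i => ∑ x : Q, M i x * v x

/-- Dot product of two vectors over `ℕ`. -/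
def dotProd {Q : Type} [Fintype Q] (v w : Q → ℕ) : ℕ :=
  ∑ x : Q, v x * w x

/-- An `ℕ`-automaton: a finite set of states `Q`, an initial row vector `α`, a weight
matrix `μ a` for every letter `a` (extended to words as a monoid morphism `μW`), and a
final column vector `β`. -/
structure NAut (A : Type) where
  Q : Type
  [finQ : Fintype Q]
  [decQ : DecidableEq Q]
  α : Q → ℕ
  μ : A → Q → Q → ℕ
  β : Q → ℕ

attribute [instance] NAut.finQ NAut.decQ

/-- The monoid morphism `A* → ℕ^{Q×Q}` extending `μ`. -/
def NAut.μW {A : Type} (T : NAut A) : List A → T.Q → T.Q → ℕ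
  | [] => matId
  | a :: w => matMul (T.μ a) (T.μW w)

/-- The total function `g : A* → ℕ` computed by the `ℕ`-automaton: `g w = α·μ(w)·β`. -/
def NAut.g {A : Type} (T : NAut A) (w : List A) : ℕ :=
  dotProd (vecMat T.α (T.μW w)) T.β

/-- Trimness: every state is accessible and co-accessible with nonzero weight. -/
def NAut.Trim {A : Type} (T : NAut A) : Prop :=
  ∀ q : T.Q, (∃ u, 1 ≤ vecMat T.α (T.μW u) q) ∧ (∃ v, 1 ≤ matVec (T.μW v) T.β q)

/-- A heavy cycle on state `q`: a nonempty word `v` with `μ(v)(q,q) ≥ 2`. -/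
def NAut.HeavyCycle {A : Type} (T : NAut A) (q : T.Q) (v : List A) : Prop :=
  v ≠ [] ∧ 2 ≤ T.μW v q q

/-- A barbell from `q` to `q' ≠ q`: a nonempty word `v` with `μ(v)(q,q) ≥ 1`,
`μ(v)(q,q') ≥ 1` and `μ(v)(q',q') ≥ 1`. -/
def NAut.Barbell {A : Type} (T : NAut A) (q q' : T.Q) (v : List A) : Prop :=
  q ≠ q' ∧ v ≠ [] ∧ 1 ≤ T.μW v q q ∧ 1 ≤ T.μW v q q' ∧ 1 ≤ T.μW v q' q'

/-- Edge of the barbell graph `𝔊`. -/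
def NAut.GEdge {A : Type} (T : NAut A) (q1 q2 : T.Q) : Prop :=
  ∃ q q' v, T.Barbell q q' v ∧ (∃ w, 1 ≤ T.μW w q1 q) ∧ (∃ w', 1 ≤ T.μW w' q' q2)

/-- `PathLen G q n`: there is a directed path of length `n` (counting edges) in the
graph `G` ending in `q`. -/
inductive PathLen {Q : Type} (G : Q → Q → Prop) : Q → ℕ → Prop
  | zero (q : Q) : PathLen G q 0
  | succ {p q : Q} {n : ℕ} : PathLen G p n → G p q → PathLen G q (n + 1)

/-- The height of `q` in the graph `G` is `n`: the maximal length of a directed path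
ending in `q` is `n`. -/
def HeightIs {Q : Type} (G : Q → Q → Prop) (q : Q) (n : ℕ) : Prop :=
  PathLen G q n ∧ ∀ m, PathLen G q m → m ≤ n

/-! ### Statement-specific predicates -/

/-- Case (1) of the trichotomy: `|f|` has exponential growth and `f` is not computable
with `k` marbles for any `k`. -/
def MarbleCase1 {A B : Type} (f : List A → List B) : Prop :=
  ExpGrowth (fun w => (f w).length) ∧ ∀ k : ℕ, ¬ ComputableKMarble f k

/-- Case (2) of the trichotomy: `|f|` has `(k+1)`-polynomial growth for some `k`, `f` is
computable with `k` marbles, and `k` is the least possible number of marbles. -/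
def MarbleCase2 {A B : Type} (f : List A → List B) : Prop :=
  ∃ k : ℕ, PolyGrowth (fun w => (f w).length) (k + 1) ∧ ComputableKMarble f k ∧
    ∀ j : ℕ, ComputableKMarble f j → k ≤ j

/-- Case (3) of the trichotomy: `|f|` has `0`-polynomial growth and `f` is computable
with `0` marbles. -/
def MarbleCase3 {A B : Type} (f : List A → List B) : Prop :=
  PolyGrowth (fun w => (f w).length) 0 ∧ ComputableKMarble f 0

/-- The second alternative of Lemma `lem:graph`: `g` has `k`-polynomial growth for some
`k ≥ 0` and the states admit a partition `S_0, …, S_k` satisfying (a), (b), (c). -/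
def NAutPolyCase {A : Type} (T : NAut A) : Prop :=
  ∃ k : ℕ, PolyGrowth T.g k ∧
    ∃ S : T.Q → Fin (k + 1),
      (∀ q q' : T.Q, (∃ w, 1 ≤ T.μW w q q') → S q ≤ S q') ∧
      (∃ Bd : ℕ, ∀ q q' : T.Q, S q = S q' → ∀ w, T.μW w q q' ≤ Bd) ∧
      (∀ q : T.Q, ∃ C : ℕ, ∀ w, vecMat T.α (T.μW w) q ≤ C * w.length ^ (S q : ℕ) + C)

set_option linter.unusedSectionVars false

namespace NAut
variable {A : Type} (T : NAut A)

lemma matMul_id_left {Q : Type} [Fintype Q] [DecidableEq Q] (M : Q → Q → ℕ) :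
    matMul matId M = M := by
  funext i j
  simp [matMul, matId, ite_mul, Finset.sum_ite_eq]

lemma matMul_id_right {Q : Type} [Fintype Q] [DecidableEq Q] (M : Q → Q → ℕ) :
    matMul M matId = M := by
  funext i j
  simp [matMul, matId, mul_ite, Finset.sum_ite_eq']

lemma matMul_assoc {Q : Type} [Fintype Q] (M N P : Q → Q → ℕ) :
    matMul (matMul M N) P = matMul M (matMul N P) := by
  funext i j
  simp only [matMul, Finset.sum_mul, Finset.mul_sum, mul_assoc]
  exact Finset.sum_comm

lemma μW_append (u v : List A) : T.μW (u ++ v) = matMul (T.μW u) (T.μW v) := by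
  induction u with
  | nil => simp [μW, matMul_id_left]
  | cons a u ih => simp [μW, ih, matMul_assoc]

lemma matMul_le_of_mem {Q : Type} [Fintype Q] (M N : Q → Q → ℕ) (i x j : Q) :
    M i x * N x j ≤ matMul M N i j := by
  unfold matMul
  exact Finset.single_le_sum (f := fun y => M i y * N y j) (fun y _ => Nat.zero_le _) (Finset.mem_univ x)

lemma entry_append_ge (u v : List A) (p q r : T.Q) :
    T.μW u p q * T.μW v q r ≤ T.μW (u ++ v) p r := by
  rw [μW_append]; exact matMul_le_of_mem _ _ _ _ _

/-- Reachability with positive weight. -/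
def Reach (p q : T.Q) : Prop := ∃ w, 1 ≤ T.μW w p q

lemma reach_refl (p : T.Q) : T.Reach p p := ⟨[], by simp [μW, matId]⟩

lemma reach_trans {p q r : T.Q} (h1 : T.Reach p q) (h2 : T.Reach q r) : T.Reach p r := by
  obtain ⟨u, hu⟩ := h1; obtain ⟨v, hv⟩ := h2
  exact ⟨u ++ v, le_trans (Nat.mul_le_mul hu hv) (T.entry_append_ge u v p q r)⟩

def SameCl (p q : T.Q) : Prop := T.Reach p q ∧ T.Reach q p

lemma sameCl_refl (p : T.Q) : T.SameCl p p := ⟨T.reach_refl p, T.reach_refl p⟩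

lemma matId_le_one {Q : Type} [DecidableEq Q] (p q : Q) : matId p q ≤ 1 := by
  unfold matId; split <;> omega

lemma reach_single {a : A} {p q : T.Q} (h : 1 ≤ T.μ a p q) : T.Reach p q := by
  refine ⟨[a], ?_⟩
  calc 1 ≤ T.μ a p q * matId q q := by simp [matId, h]
  _ ≤ T.μW [a] p q := matMul_le_of_mem _ _ _ _ _

lemma sameCl_entry_le_one (hHC : ¬ ∃ q v, T.HeavyCycle q v) {p q : T.Q}
    (h : T.SameCl p q) (w : List A) : T.μW w p q ≤ 1 := by
  by_contra hgt
  push_neg at hgt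
  obtain ⟨u, hu⟩ := h.2
  have hw : w ≠ [] := by
    rintro rfl
    have := matId_le_one (Q := T.Q) p q
    simp only [μW] at hgt
    omega
  refine hHC ⟨p, w ++ u, ⟨by simp [hw], ?_⟩⟩
  calc 2 = 2 * 1 := rfl
  _ ≤ T.μW w p q * T.μW u q p := Nat.mul_le_mul hgt hu
  _ ≤ _ := T.entry_append_ge _ _ _ _ _

lemma entry_zero_of_not_reach {p q : T.Q} (h : ¬ T.Reach p q) (w : List A) :
    T.μW w p q = 0 := by
  by_contra hne
  exact h ⟨w, Nat.one_le_iff_ne_zero.2 hne⟩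

end NAut

namespace NAut
variable {A : Type} (T : NAut A)

/-- `f` is (the state sequence of) a path over `w`. -/
def IsPath (w : List A) (f : ℕ → T.Q) : Prop :=
  ∀ i (h : i < w.length), 1 ≤ T.μ (w[i]'h) (f i) (f (i + 1))

lemma path_seg {w : List A} {f : ℕ → T.Q} (hf : T.IsPath w f) :
    ∀ k a, a + k ≤ w.length → 1 ≤ T.μW ((w.drop a).take k) (f a) (f (a + k)) := by
  intro k
  induction k with
  | zero => intro a _; simp [μW, matId]
  | succ k ih =>
    intro a hak
    have ha : a < w.length := by omega
    have hdrop : w.drop a = (w[a]'ha) :: w.drop (a + 1) := List.drop_eq_getElem_cons ha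
    rw [hdrop]
    simp only [List.take_succ_cons, μW]
    have h1 : 1 ≤ T.μ (w[a]'ha) (f a) (f (a + 1)) := hf a ha
    have h2 : 1 ≤ T.μW ((w.drop (a + 1)).take k) (f (a + 1)) (f (a + 1 + k)) :=
      ih (a + 1) (by omega)
    have h3 := matMul_le_of_mem (T.μ (w[a]'ha)) (T.μW ((w.drop (a + 1)).take k))
      (f a) (f (a + 1)) (f (a + 1 + k))
    have : a + 1 + k = a + (k + 1) := by omega
    rw [this] at h2 h3
    calc 1 = 1 * 1 := rfl
    _ ≤ _ := le_trans (Nat.mul_le_mul h1 h2) h3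

lemma exists_path_of_entry {w : List A} {p q : T.Q} (h : 1 ≤ T.μW w p q) :
    ∃ f : ℕ → T.Q, f 0 = p ∧ f w.length = q ∧ T.IsPath w f := by
  induction w generalizing p with
  | nil =>
    have : p = q := by
      by_contra hne
      simp [μW, matId, hne] at h
    exact ⟨fun _ => p, rfl, by simpa [this], fun i hi => by simp at hi⟩
  | cons a w ih =>
    simp only [μW, matMul] at h
    have hne : (∑ x : T.Q, T.μ a p x * T.μW w x q) ≠ 0 := by omega
    obtain ⟨s, _, hs⟩ := Finset.exists_ne_zero_of_sum_ne_zero hne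
    rw [Nat.mul_ne_zero_iff] at hs
    obtain ⟨f', hf0, hfl, hf⟩ := ih (p := s) (Nat.one_le_iff_ne_zero.2 hs.2)
    refine ⟨fun t => if t = 0 then p else f' (t - 1), by simp, by simp [hfl], ?_⟩
    intro i hi
    match i with
    | 0 =>
      simpa [hf0] using Nat.one_le_iff_ne_zero.2 hs.1
    | (i + 1) =>
      simpa using hf i (by simpa using hi)

lemma reach_of_seg {w : List A} {f : ℕ → T.Q} (hf : T.IsPath w f) {a b : ℕ}
    (hab : a ≤ b) (hb : b ≤ w.length) : T.Reach (f a) (f b) := by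
  have := T.path_seg hf (b - a) a (by omega)
  rw [show a + (b - a) = b by omega] at this
  exact ⟨_, this⟩

end NAut

namespace NAut
variable {A : Type} (T : NAut A)

/-- Position `j` of `w` is contributing for the pair `(p, q)`. -/
def Contrib (p q : T.Q) (w : List A) (j : ℕ) : Prop :=
  ∃ (hj : j < w.length) (r s : T.Q), T.SameCl p r ∧ ¬ T.SameCl p s ∧
    1 ≤ T.μW (w.take j) p r ∧ 1 ≤ T.μ (w[j]'hj) r s ∧ 1 ≤ T.μW (w.drop (j+1)) s q

lemma contrib_path {p q : T.Q} {w : List A} {j : ℕ} (h : T.Contrib p q w j) :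
    ∃ σ : ℕ → T.Q, T.IsPath w σ ∧ (∀ t, t ≤ j → T.SameCl p (σ t)) ∧
      (∀ t, j < t → t ≤ w.length → ¬ T.SameCl p (σ t)) := by
  obtain ⟨hj, r, s, hr, hs, h1, h2, h3⟩ := h
  obtain ⟨f1, hf10, hf1l, hf1⟩ := T.exists_path_of_entry h1
  obtain ⟨f2, hf20, hf2l, hf2⟩ := T.exists_path_of_entry h3
  have hlen1 : (w.take j).length = j := by simp; omega
  rw [hlen1] at hf1l
  set σ : ℕ → T.Q := fun t => if t ≤ j then f1 t else f2 (t - (j+1)) with hσdef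
  have hσ0 : σ 0 = p := by simp [hσdef, hf10]
  have hσj : σ j = r := by simp [hσdef, hf1l]
  have hσj1 : σ (j+1) = s := by simp [hσdef, hf20]
  have hpath : T.IsPath w σ := by
    intro t ht
    rcases lt_trichotomy t j with h' | h' | h'
    · have e1 : σ t = f1 t := by simp [hσdef, le_of_lt h']
      have e2 : σ (t+1) = f1 (t+1) := by simp [hσdef, (by omega : t + 1 ≤ j)]
      rw [e1, e2]
      have := hf1 t (by simpa [hlen1] using h')
      simpa using this
    · subst h'
      rw [hσj, hσj1]
      exact h2
    · have e1 : σ t = f2 (t - (j+1)) := if_neg (by omega)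
      have e2 : σ (t+1) = f2 (t + 1 - (j+1)) := if_neg (by omega)
      rw [e1, e2]
      have hlt : t - (j+1) < (w.drop (j+1)).length := by simp; omega
      have := hf2 (t - (j+1)) hlt
      have hget : (w.drop (j+1))[t - (j+1)]'hlt = w[t]'ht := by
        simp only [List.getElem_drop]
        congr 1
        omega
      rw [hget] at this
      rw [(by omega : t - (j + 1) + 1 = t + 1 - (j + 1))] at this
      exact this
  refine ⟨σ, hpath, ?_, ?_⟩
  · intro t htj
    constructor
    · rw [← hσ0]
      exact T.reach_of_seg hpath (Nat.zero_le t) (by omega)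
    · refine T.reach_trans ?_ hr.2
      rw [← hσj]
      exact T.reach_of_seg hpath htj (by omega)
  · intro t h1t h2t hcon
    apply hs
    have hreach_s : T.Reach s (σ t) := by
      rw [← hσj1]
      exact T.reach_of_seg hpath (by omega) h2t
    refine ⟨T.reach_trans hr.1 (T.reach_single h2), T.reach_trans hreach_s hcon.2⟩

end NAut

section Ramsey

open Finset

/-- Greedy pre-homogeneous sequence extraction. -/
lemma preHom {K : Type} [Fintype K] [DecidableEq K] [Nonempty K] (col : ℕ → ℕ → K) :
    ∀ (t : ℕ) (S : Finset ℕ), (Fintype.card K + 1) ^ t ≤ S.card →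
    ∃ a : Fin t → ℕ, (∀ i, a i ∈ S) ∧ StrictMono a ∧
      ∃ c : Fin t → K, ∀ i j : Fin t, i < j → col (a i) (a j) = c i := by
  intro t
  induction t with
  | zero =>
    intro S _
    exact ⟨Fin.elim0, fun i => i.elim0, fun i => i.elim0, Fin.elim0, fun i => i.elim0⟩
  | succ t ih =>
    intro S hS
    have hpow : 0 < (Fintype.card K + 1) ^ (t+1) := Nat.pow_pos (by omega)
    have hne : S.Nonempty := Finset.card_pos.mp (by omega)
    set a0 := S.min' hne with ha0
    set S' := S.erase a0 with hS'
    have hcard' : (Fintype.card K) * (Fintype.card K + 1) ^ t ≤ S'.card := by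
      have h1 : S'.card = S.card - 1 := Finset.card_erase_of_mem (S.min'_mem hne)
      have h2 : (Fintype.card K + 1) ^ (t+1) =
          (Fintype.card K) * (Fintype.card K + 1) ^ t + (Fintype.card K + 1) ^ t := by
        ring
      have h3 : 0 < (Fintype.card K + 1) ^ t := Nat.pow_pos (by omega)
      omega
    obtain ⟨c0, _, hc0⟩ := Finset.exists_le_card_fiber_of_mul_le_card_of_maps_to
      (f := col a0) (t := (Finset.univ : Finset K))
      (fun x _ => Finset.mem_univ _) Finset.univ_nonempty
      (by simpa using hcard')
    set F := S'.filter (fun x => col a0 x = c0) with hF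
    obtain ⟨a', haS, hamono, c', hc'⟩ := ih F hc0
    have ha0lt : ∀ i, a0 < a' i := by
      intro i
      have hmem := haS i
      rw [hF] at hmem
      have h1 := Finset.mem_filter.mp hmem
      have h2 := Finset.mem_erase.mp h1.1
      exact lt_of_le_of_ne (S.min'_le _ h2.2) (Ne.symm h2.1)
    refine ⟨Fin.cases a0 a', ?_, ?_, Fin.cases c0 c', ?_⟩
    · intro i
      refine Fin.cases ?_ ?_ i
      · exact S.min'_mem hne
      · intro i'
        simp only [Fin.cases_succ]
        have := Finset.mem_filter.mp ((hF ▸ haS i'))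
        exact Finset.mem_of_mem_erase this.1
    · intro i j hij
      rcases Fin.eq_zero_or_eq_succ i with rfl | ⟨i', rfl⟩ <;>
        rcases Fin.eq_zero_or_eq_succ j with rfl | ⟨j', rfl⟩
      · exact absurd hij (lt_irrefl _)
      · simp only [Fin.cases_zero, Fin.cases_succ]
        exact ha0lt j'
      · exact absurd hij (by simp [Fin.lt_def])
      · simp only [Fin.cases_succ]
        exact hamono (by
          rw [Fin.lt_def] at hij ⊢
          simpa using hij)
    · intro i j hij
      rcases Fin.eq_zero_or_eq_succ i with rfl | ⟨i', rfl⟩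
      · rcases Fin.eq_zero_or_eq_succ j with rfl | ⟨j', rfl⟩
        · exact absurd hij (lt_irrefl _)
        · simp only [Fin.cases_zero, Fin.cases_succ]
          have := Finset.mem_filter.mp ((hF ▸ haS j'))
          exact this.2
      · rcases Fin.eq_zero_or_eq_succ j with rfl | ⟨j', rfl⟩
        · exact absurd hij (by simp [Fin.lt_def])
        · simp only [Fin.cases_succ]
          exact hc' i' j' (by
            rw [Fin.lt_def] at hij ⊢
            simpa using hij)

/-- Three ordered elements of a finset of size ≥ 3. -/
lemma exists_three {α : Type} [LinearOrder α] (F : Finset α) (h : 3 ≤ F.card) :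
    ∃ x y z, x ∈ F ∧ y ∈ F ∧ z ∈ F ∧ x < y ∧ y < z := by
  have h1 : F.Nonempty := Finset.card_pos.mp (by omega)
  set x := F.min' h1 with hx
  set F' := F.erase x with hF'
  have hcard' : 2 ≤ F'.card := by
    have h' := Finset.card_erase_of_mem (F.min'_mem h1)
    rw [← hx, ← hF'] at h'
    omega
  have h2 : F'.Nonempty := Finset.card_pos.mp (by omega)
  set y := F'.min' h2 with hy
  set F'' := F'.erase y with hF''
  have hcard'' : 1 ≤ F''.card := by
    have h' := Finset.card_erase_of_mem (F'.min'_mem h2)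
    rw [← hy, ← hF''] at h'
    omega
  have h3 : F''.Nonempty := Finset.card_pos.mp (by omega)
  set z := F''.min' h3 with hz
  have hyF : y ∈ F' := F'.min'_mem h2
  have hzF'' : z ∈ F'' := F''.min'_mem h3
  have hzF' : z ∈ F' := Finset.mem_of_mem_erase hzF''
  refine ⟨x, y, z, F.min'_mem h1, Finset.mem_of_mem_erase hyF, Finset.mem_of_mem_erase hzF', ?_, ?_⟩
  · exact lt_of_le_of_ne (F.min'_le _ (Finset.mem_of_mem_erase hyF))
      (Ne.symm (Finset.mem_erase.mp hyF).1)
  · exact lt_of_le_of_ne (F'.min'_le _ hzF') (Ne.symm (Finset.mem_erase.mp hzF'').1)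

/-- Pigeonhole: among `2m+3` values with `m` colors, three share a color. -/
lemma exists_three_eq {K : Type} [Fintype K] [DecidableEq K] [Nonempty K] {N : ℕ}
    (hN : 2 * Fintype.card K + 3 ≤ N) (c : Fin N → K) :
    ∃ i1 i2 i3 : Fin N, i1 < i2 ∧ i2 < i3 ∧ c i1 = c i2 ∧ c i2 = c i3 := by
  obtain ⟨b, _, hb⟩ := Finset.exists_lt_card_fiber_of_mul_lt_card_of_maps_to
    (f := c) (s := Finset.univ) (t := (Finset.univ : Finset K))
    (fun x _ => Finset.mem_univ _)
    (show (Finset.univ : Finset K).card * 2 < (Finset.univ : Finset (Fin N)).card by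
      simp only [Finset.card_univ, Fintype.card_fin]; omega)
  obtain ⟨i1, i2, i3, h1, h2, h3, h12, h23⟩ :=
    exists_three (Finset.univ.filter (fun x => c x = b)) (by omega)
  have e1 := (Finset.mem_filter.mp h1).2
  have e2 := (Finset.mem_filter.mp h2).2
  have e3 := (Finset.mem_filter.mp h3).2
  exact ⟨i1, i2, i3, h12, h23, by rw [e1, e2], by rw [e2, e3]⟩

end Ramsey

namespace NAut
variable {A : Type} (T : NAut A)

/-- The set of contributing positions. -/
noncomputable def cset (p q : T.Q) (w : List A) : Finset ℕ :=
  @Finset.filter _ (T.Contrib p q w) (Classical.decPred _) (Finset.range w.length)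

/-- The Ramsey-type bound on the number of contributing positions. -/
noncomputable def rb (T : NAut A) : ℕ :=
  (Fintype.card (T.Q × T.Q × T.Q × T.Q) + 1) ^
    (2 * Fintype.card (T.Q × T.Q × T.Q × T.Q) + 3 + 1) - 1

lemma cset_card_le (hB : ¬ ∃ q q' v, T.Barbell q q' v) (p q : T.Q) (w : List A) :
    (T.cset p q w).card ≤ T.rb := by
  classical
  by_contra hgt
  push_neg at hgt
  set m := Fintype.card (T.Q × T.Q × T.Q × T.Q) with hm
  have hcard : (m + 1) ^ (2 * m + 3 + 1) ≤ (T.cset p q w).card := by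
    have hpow : 0 < (m + 1) ^ (2 * m + 3 + 1) := Nat.pow_pos (by omega)
    have : T.rb = (m + 1) ^ (2 * m + 3 + 1) - 1 := rfl
    omega
  -- choose paths for every contributing position
  have hch : ∀ j : ℕ, ∃ σ : ℕ → T.Q, j ∈ T.cset p q w →
      (T.IsPath w σ ∧ (∀ t, t ≤ j → T.SameCl p (σ t)) ∧
        (∀ t, j < t → t ≤ w.length → ¬ T.SameCl p (σ t))) := by
    intro j
    by_cases h : j ∈ T.cset p q w
    · obtain ⟨σ, h1, h2, h3⟩ := T.contrib_path (Finset.mem_filter.mp h).2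
      exact ⟨σ, fun _ => ⟨h1, h2, h3⟩⟩
    · exact ⟨fun _ => p, fun h' => absurd h' h⟩
  choose σ hσ using hch
  haveI : Nonempty (T.Q × T.Q × T.Q × T.Q) := ⟨(p, p, p, p)⟩
  set col : ℕ → ℕ → T.Q × T.Q × T.Q × T.Q :=
    fun i i' => (σ i' i, σ i i', σ i i, σ i' i') with hcoldef
  obtain ⟨a, haS, hmono, c, hcol⟩ := preHom col (2 * m + 3 + 1) (T.cset p q w) hcard
  obtain ⟨i1, i2, i3, h12, h23, hc12, hc23⟩ :=
    exists_three_eq (le_refl (2 * m + 3)) (fun i : Fin (2 * m + 3) => c i.castSucc)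
  set k1 := a i1.castSucc with hk1
  set k2 := a i2.castSucc with hk2
  set k3 := a i3.castSucc with hk3
  set k4 := a (Fin.last (2 * m + 3)) with hk4
  have hk12 : k1 < k2 := hmono (by simpa using h12)
  have hk23 : k2 < k3 := hmono (by simpa using h23)
  have hk34 : k3 < k4 := hmono (Fin.castSucc_lt_last i3)
  -- membership and bounds
  have hmem : ∀ i : Fin (2 * m + 3 + 1), a i ∈ T.cset p q w := haS
  have hlt : ∀ i : Fin (2 * m + 3 + 1), a i < w.length := by
    intro i
    exact Finset.mem_range.mp (Finset.mem_filter.mp (hmem i)).1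
  -- the common colour
  set κ := c i1.castSucc with hκ
  have hcol12 : col k1 k2 = κ := hcol _ _ (by simpa using h12)
  have hcol13 : col k1 k3 = κ := hcol _ _ (by simpa using lt_trans h12 h23)
  have hcol23 : col k2 k3 = κ := by rw [hcol _ _ (by simpa using h23)]; rw [← hc12]
  have hcol24 : col k2 k4 = κ := by
    rw [hcol _ _ (Fin.castSucc_lt_last i2)]; rw [← hc12]
  have hcol34 : col k3 k4 = κ := by
    rw [hcol _ _ (Fin.castSucc_lt_last i3)]; rw [← hc23, ← hc12]
  set e := κ.1 with he
  set d := κ.2.1 with hd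
  set r := κ.2.2.1 with hr
  -- component equalities
  have hv1 : σ k4 k2 = e := congrArg (fun x => x.1) hcol24
  have hv2 : σ k4 k3 = e := congrArg (fun x => x.1) hcol34
  have hv3 : σ k3 k2 = e := congrArg (fun x => x.1) hcol23
  have hv4 : σ k2 k2 = r := congrArg (fun x => x.2.2.1) hcol23
  have hv5 : σ k3 k3 = r := congrArg (fun x => x.2.2.1) hcol34
  have hv6 : σ k2 k3 = d := congrArg (fun x => x.2.1) hcol23
  have hv7 : σ k1 k2 = d := congrArg (fun x => x.2.1) hcol12
  have hv8 : σ k1 k3 = d := congrArg (fun x => x.2.1) hcol13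
  -- paths and their properties
  obtain ⟨hp1, hcl1, hncl1⟩ := hσ k1 (hmem _)
  obtain ⟨hp2, hcl2, hncl2⟩ := hσ k2 (hmem _)
  obtain ⟨hp3, hcl3, hncl3⟩ := hσ k3 (hmem _)
  obtain ⟨hp4, hcl4, hncl4⟩ := hσ k4 (hmem _)
  -- the word u
  set u := (w.drop k2).take (k3 - k2) with hu
  have hseg : ∀ (k : ℕ) (f : ℕ → T.Q), T.IsPath w f → 1 ≤ T.μW u (f k2) (f k3) := by
    intro k f hf
    have := T.path_seg hf (k3 - k2) k2 (by have := hlt i3.castSucc; omega)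
    rwa [show k2 + (k3 - k2) = k3 by omega] at this
  have hee : 1 ≤ T.μW u e e := by have := hseg k4 _ hp4; rwa [hv1, hv2] at this
  have her : 1 ≤ T.μW u e r := by have := hseg k3 _ hp3; rwa [hv3, hv5] at this
  have hrd : 1 ≤ T.μW u r d := by have := hseg k2 _ hp2; rwa [hv4, hv6] at this
  have hdd : 1 ≤ T.μW u d d := by have := hseg k1 _ hp1; rwa [hv7, hv8] at this
  -- classes
  have hecl : T.SameCl p e := by rw [← hv1]; exact hcl4 k2 (by omega)
  have hdcl : ¬ T.SameCl p d := by
    rw [← hv7]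
    exact hncl1 k2 hk12 (le_of_lt (hlt i2.castSucc))
  have hed : e ≠ d := fun hh => hdcl (hh ▸ hecl)
  have hune : u ≠ [] := by
    have : u.length = k3 - k2 := by
      rw [hu, List.length_take, List.length_drop]
      have := hlt i3.castSucc
      omega
    intro hnil
    rw [hnil] at this
    simp at this
    omega
  refine hB ⟨e, d, u ++ u, hed, by simp [hune], ?_, ?_, ?_⟩
  · calc 1 = 1 * 1 := rfl
    _ ≤ T.μW u e e * T.μW u e e := Nat.mul_le_mul hee hee
    _ ≤ _ := T.entry_append_ge _ _ _ _ _
  · calc 1 = 1 * 1 := rfl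
    _ ≤ T.μW u e r * T.μW u r d := Nat.mul_le_mul her hrd
    _ ≤ _ := T.entry_append_ge _ _ _ _ _
  · calc 1 = 1 * 1 := rfl
    _ ≤ T.μW u d d * T.μW u d d := Nat.mul_le_mul hdd hdd
    _ ≤ _ := T.entry_append_ge _ _ _ _ _

end NAut

namespace NAut
variable {A : Type} [Fintype A] (T : NAut A)

/-- Max entry of a letter matrix. -/
noncomputable def K0 (T : NAut A) [Fintype A] : ℕ :=
  Finset.sup Finset.univ (fun x : A × T.Q × T.Q => T.μ x.1 x.2.1 x.2.2)

lemma μ_le_K0 (a : A) (r s : T.Q) : T.μ a r s ≤ T.K0 :=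
  Finset.le_sup (f := fun x : A × T.Q × T.Q => T.μ x.1 x.2.1 x.2.2)
    (Finset.mem_univ (a, r, s))

lemma take_succ_entry (w : List A) {j : ℕ} (hj : j < w.length) (p s : T.Q) :
    T.μW (w.take (j+1)) p s = matMul (T.μW (w.take j)) (T.μ (w[j]'hj)) p s := by
  have h1 : w.take (j+1) = w.take j ++ [w[j]'hj] := by
    rw [List.take_succ]
    simp [List.getElem?_eq_getElem hj]
  rw [h1, μW_append]
  have h2 : T.μW [w[j]'hj] = T.μ (w[j]'hj) := by
    show matMul _ matId = _
    rw [matMul_id_right]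
  rw [h2]

lemma decomp_aux (hHC : ¬ ∃ q v, T.HeavyCycle q v) {p q : T.Q} (hpq : ¬ T.SameCl p q)
    {Bd : ℕ} (hBd : ∀ s, T.Reach p s → ¬ T.SameCl p s → ∀ v, T.μW v s q ≤ Bd)
    (w : List A) :
    ∀ k j, j + k = w.length →
      (∑ r ∈ @Finset.filter _ (fun r => T.SameCl p r) (Classical.decPred _) Finset.univ,
          T.μW (w.take j) p r * T.μW (w.drop j) r q)
        ≤ (@Finset.filter _ (T.Contrib p q w) (Classical.decPred _)
            (Finset.Ico j w.length)).card
          * (Fintype.card T.Q * Fintype.card T.Q * T.K0 * Bd) := by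
  classical
  set n := Fintype.card T.Q with hn
  set D := n * n * T.K0 * Bd with hD
  intro k
  induction k with
  | zero =>
    intro j hj
    have hj' : j = w.length := by omega
    subst hj'
    have : ∀ r ∈ @Finset.filter _ (fun r => T.SameCl p r) (Classical.decPred _) Finset.univ,
        T.μW (w.take w.length) p r * T.μW (w.drop w.length) r q = 0 := by
      intro r hr
      have hcl : T.SameCl p r := (Finset.mem_filter.mp hr).2
      have : T.μW (w.drop w.length) r q = 0 := by
        rw [List.drop_length]
        show matId r q = 0
        unfold matId
        rw [if_neg]
        rintro rfl
        exact hpq hcl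
      rw [this, Nat.mul_zero]
    rw [Finset.sum_eq_zero this]
    exact Nat.zero_le _
  | succ k ih =>
    intro j hjk
    have hj : j < w.length := by omega
    have hdrop : w.drop j = (w[j]'hj) :: w.drop (j+1) := List.drop_eq_getElem_cons hj
    have step1 :
        (∑ r ∈ @Finset.filter _ (fun r => T.SameCl p r) (Classical.decPred _) Finset.univ,
          T.μW (w.take j) p r * T.μW (w.drop j) r q)
        = ∑ s : T.Q, ∑ r ∈ @Finset.filter _ (fun r => T.SameCl p r) (Classical.decPred _)
            Finset.univ,
            T.μW (w.take j) p r * (T.μ (w[j]'hj) r s * T.μW (w.drop (j+1)) s q) := by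
      rw [Finset.sum_comm]
      apply Finset.sum_congr rfl
      intro r _
      rw [hdrop]
      show T.μW (w.take j) p r * matMul _ _ r q = _
      unfold matMul
      rw [Finset.mul_sum]
    rw [step1]
    rw [← Finset.sum_filter_add_sum_filter_not Finset.univ (fun s => T.SameCl p s)]
    -- Part A : s in the class
    have partA :
        (∑ s ∈ Finset.univ.filter (fun s => T.SameCl p s),
          ∑ r ∈ Finset.univ.filter (fun r => T.SameCl p r),
            T.μW (w.take j) p r * (T.μ (w[j]'hj) r s * T.μW (w.drop (j+1)) s q))
        ≤ (@Finset.filter _ (T.Contrib p q w) (Classical.decPred _)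
            (Finset.Ico (j+1) w.length)).card * D := by
      have hinner : ∀ s ∈ Finset.univ.filter (fun s => T.SameCl p s),
          (∑ r ∈ Finset.univ.filter (fun r => T.SameCl p r),
            T.μW (w.take j) p r * (T.μ (w[j]'hj) r s * T.μW (w.drop (j+1)) s q))
          ≤ T.μW (w.take (j+1)) p s * T.μW (w.drop (j+1)) s q := by
        intro s _
        have : (∑ r ∈ Finset.univ.filter (fun r => T.SameCl p r),
            T.μW (w.take j) p r * (T.μ (w[j]'hj) r s * T.μW (w.drop (j+1)) s q))
            = (∑ r ∈ Finset.univ.filter (fun r => T.SameCl p r),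
              T.μW (w.take j) p r * T.μ (w[j]'hj) r s) * T.μW (w.drop (j+1)) s q := by
          rw [Finset.sum_mul]
          apply Finset.sum_congr rfl
          intro r _
          ring
        rw [this]
        apply Nat.mul_le_mul_right
        rw [take_succ_entry T w hj]
        unfold matMul
        exact Finset.sum_le_sum_of_subset (Finset.subset_univ _)
      calc _ ≤ ∑ s ∈ Finset.univ.filter (fun s => T.SameCl p s),
          T.μW (w.take (j+1)) p s * T.μW (w.drop (j+1)) s q := Finset.sum_le_sum hinner
      _ ≤ _ := ih (j+1) (by omega)
    -- Part B : s out of the class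
    have partB :
        (∑ s ∈ Finset.univ.filter (fun s => ¬ T.SameCl p s),
          ∑ r ∈ Finset.univ.filter (fun r => T.SameCl p r),
            T.μW (w.take j) p r * (T.μ (w[j]'hj) r s * T.μW (w.drop (j+1)) s q))
        ≤ if T.Contrib p q w j then D else 0 := by
      by_cases hC : T.Contrib p q w j
      · rw [if_pos hC]
        have hterm : ∀ s ∈ Finset.univ.filter (fun s => ¬ T.SameCl p s),
            ∀ r ∈ Finset.univ.filter (fun r => T.SameCl p r),
            T.μW (w.take j) p r * (T.μ (w[j]'hj) r s * T.μW (w.drop (j+1)) s q)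
              ≤ 1 * (T.K0 * Bd) := by
          intro s hsmem r hrmem
          have hscl := (Finset.mem_filter.mp hsmem).2
          have hrcl := (Finset.mem_filter.mp hrmem).2
          by_cases h1 : 1 ≤ T.μW (w.take j) p r
          · by_cases h2 : 1 ≤ T.μ (w[j]'hj) r s
            · have hps : T.Reach p s :=
                T.reach_trans ⟨w.take j, h1⟩ (T.reach_single h2)
              exact Nat.mul_le_mul (T.sameCl_entry_le_one hHC hrcl _)
                (Nat.mul_le_mul (T.μ_le_K0 _ _ _) (hBd s hps hscl _))
            · have : T.μ (w[j]'hj) r s = 0 := by omega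
              rw [this, Nat.zero_mul, Nat.mul_zero]
              exact Nat.zero_le _
          · have : T.μW (w.take j) p r = 0 := by omega
            rw [this, Nat.zero_mul]
            exact Nat.zero_le _
        calc _ ≤ ∑ s ∈ Finset.univ.filter (fun s => ¬ T.SameCl p s),
            ∑ _r ∈ Finset.univ.filter (fun r => T.SameCl p r), 1 * (T.K0 * Bd) := by
              apply Finset.sum_le_sum
              intro s hs
              exact Finset.sum_le_sum (hterm s hs)
        _ = (Finset.univ.filter (fun s => ¬ T.SameCl p s)).card *
              ((Finset.univ.filter (fun r => T.SameCl p r)).card * (1 * (T.K0 * Bd))) := by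
              simp [Finset.sum_const, mul_comm]
        _ ≤ n * (n * (1 * (T.K0 * Bd))) := by
              apply Nat.mul_le_mul (le_trans (Finset.card_filter_le _ _) (le_of_eq Finset.card_univ))
              apply Nat.mul_le_mul_right
              exact le_trans (Finset.card_filter_le _ _) (le_of_eq Finset.card_univ)
        _ = D := by rw [hD]; ring
      · rw [if_neg hC]
        apply le_of_eq
        apply Finset.sum_eq_zero
        intro s hsmem
        apply Finset.sum_eq_zero
        intro r hrmem
        have hscl := (Finset.mem_filter.mp hsmem).2
        have hrcl := (Finset.mem_filter.mp hrmem).2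
        by_contra hne
        have h1 : T.μW (w.take j) p r ≠ 0 ∧
            (T.μ (w[j]'hj) r s ≠ 0 ∧ T.μW (w.drop (j+1)) s q ≠ 0) := by
          constructor
          · intro h0; exact hne (by rw [h0, Nat.zero_mul])
          constructor
          · intro h0; exact hne (by rw [h0, Nat.zero_mul, Nat.mul_zero])
          · intro h0; exact hne (by rw [h0, Nat.mul_zero, Nat.mul_zero])
        exact hC ⟨hj, r, s, hrcl, hscl, Nat.one_le_iff_ne_zero.2 h1.1,
          Nat.one_le_iff_ne_zero.2 h1.2.1, Nat.one_le_iff_ne_zero.2 h1.2.2⟩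
    -- assemble
    have hcardid : (@Finset.filter _ (T.Contrib p q w) (Classical.decPred _)
          (Finset.Ico j w.length)).card
        = (if T.Contrib p q w j then 1 else 0) +
          (@Finset.filter _ (T.Contrib p q w) (Classical.decPred _)
            (Finset.Ico (j+1) w.length)).card := by
      have hins : Finset.Ico j w.length = insert j (Finset.Ico (j+1) w.length) := by
        ext x
        simp only [Finset.mem_Ico, Finset.mem_insert]
        omega
      rw [hins, Finset.filter_insert]
      by_cases hC : T.Contrib p q w j
      · rw [if_pos hC, if_pos hC]
        rw [Finset.card_insert_of_notMem]
        · omega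
        · intro hmem
          have := (Finset.mem_filter.mp hmem).1
          simp only [Finset.mem_Ico] at this
          omega
      · rw [if_neg hC, if_neg hC]
        omega
    rw [hcardid]
    by_cases hC : T.Contrib p q w j
    · rw [if_pos hC] at partB
      rw [if_pos hC]
      calc _ ≤ (@Finset.filter _ (T.Contrib p q w) (Classical.decPred _)
            (Finset.Ico (j+1) w.length)).card * D + D := Nat.add_le_add partA partB
      _ = _ := by ring
    · rw [if_neg hC] at partB
      rw [if_neg hC]
      calc _ ≤ (@Finset.filter _ (T.Contrib p q w) (Classical.decPred _)
            (Finset.Ico (j+1) w.length)).card * D + 0 := Nat.add_le_add partA partB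
      _ = _ := by ring

end NAut

namespace NAut
variable {A : Type} [Fintype A] (T : NAut A)

noncomputable def between (p q : T.Q) : Finset T.Q :=
  @Finset.filter _ (fun s => T.Reach p s ∧ T.Reach s q) (Classical.decPred _) Finset.univ

noncomputable def bnd (T : NAut A) [Fintype A] : ℕ → ℕ
  | 0 => 1
  | m+1 => T.rb * (Fintype.card T.Q * Fintype.card T.Q * T.K0 * T.bnd m) + 1

lemma mem_between {p q t : T.Q} : t ∈ T.between p q ↔ T.Reach p t ∧ T.Reach t q := by
  rw [between, @Finset.mem_filter _ _ (Classical.decPred _)]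
  simp

lemma decomp (hHC : ¬ ∃ q v, T.HeavyCycle q v) {p q : T.Q} (hpq : ¬ T.SameCl p q)
    {Bd : ℕ} (hBd : ∀ s, T.Reach p s → ¬ T.SameCl p s → ∀ v, T.μW v s q ≤ Bd)
    (w : List A) :
    T.μW w p q ≤ (T.cset p q w).card * (Fintype.card T.Q * Fintype.card T.Q * T.K0 * Bd) := by
  classical
  have h := T.decomp_aux hHC hpq hBd w w.length 0 (by omega)
  have hLHS :
      (∑ r ∈ @Finset.filter _ (fun r => T.SameCl p r) (Classical.decPred _) Finset.univ,
        T.μW (w.take 0) p r * T.μW (w.drop 0) r q) = T.μW w p q := by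
    rw [Finset.sum_eq_single_of_mem p
      (Finset.mem_filter.mpr ⟨Finset.mem_univ _, T.sameCl_refl p⟩)]
    · simp only [List.take_zero, List.drop_zero]
      show matId p p * T.μW w p q = _
      simp [matId]
    · intro r _ hrp
      simp only [List.take_zero]
      show matId p r * T.μW (w.drop 0) r q = 0
      unfold matId
      rw [if_neg (Ne.symm hrp), Nat.zero_mul]
  rw [hLHS] at h
  have : T.cset p q w = @Finset.filter _ (T.Contrib p q w) (Classical.decPred _)
      (Finset.Ico 0 w.length) := by
    unfold cset
    rw [Finset.range_eq_Ico]
  rw [this]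
  exact h

lemma entry_bound (hHC : ¬ ∃ q v, T.HeavyCycle q v)
    (hB : ¬ ∃ q q' v, T.Barbell q q' v) :
    ∀ m (p q : T.Q) (w : List A), (T.between p q).card ≤ m → T.μW w p q ≤ T.bnd m := by
  classical
  intro m
  induction m with
  | zero =>
    intro p q w hcard
    have hnr : ¬ T.Reach p q := by
      intro hr
      have : p ∈ T.between p q := T.mem_between.mpr ⟨T.reach_refl p, hr⟩
      have := Finset.card_pos.mpr ⟨p, this⟩
      omega
    rw [T.entry_zero_of_not_reach hnr]
    exact Nat.zero_le _
  | succ m ih =>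
    intro p q w hcard
    by_cases hre : T.Reach p q
    · by_cases hcl : T.SameCl p q
      · calc T.μW w p q ≤ 1 := T.sameCl_entry_le_one hHC hcl w
        _ ≤ T.bnd (m+1) := by show 1 ≤ _ * _ + 1; omega
      · have hBd : ∀ s, T.Reach p s → ¬ T.SameCl p s → ∀ v, T.μW v s q ≤ T.bnd m := by
          intro s hps hscl v
          apply ih
          by_cases hsq : T.Reach s q
          · have hsub : T.between s q ⊆ (T.between p q).erase p := by
              intro t ht
              have hmem := T.mem_between.mp ht
              refine Finset.mem_erase.mpr ⟨?_, T.mem_between.mpr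
                ⟨T.reach_trans hps hmem.1, hmem.2⟩⟩
              rintro rfl
              exact hscl ⟨hps, hmem.1⟩
            have hple : p ∈ T.between p q := T.mem_between.mpr ⟨T.reach_refl p, hre⟩
            have h1 := Finset.card_le_card hsub
            have h2 := Finset.card_erase_of_mem hple
            omega
          · have : T.between s q = ∅ := by
              apply Finset.eq_empty_iff_forall_notMem.mpr
              intro t ht
              obtain ⟨h1, h2⟩ := T.mem_between.mp ht
              exact hsq (T.reach_trans h1 h2)
            rw [this]
            simp
        calc T.μW w p q
            ≤ (T.cset p q w).card * (Fintype.card T.Q * Fintype.card T.Q * T.K0 * T.bnd m) :=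
              T.decomp hHC hcl hBd w
        _ ≤ T.rb * (Fintype.card T.Q * Fintype.card T.Q * T.K0 * T.bnd m) :=
              Nat.mul_le_mul_right _ (T.cset_card_le hB p q w)
        _ ≤ T.bnd (m+1) := by show _ ≤ _ * _ + 1; omega
    · rw [T.entry_zero_of_not_reach hre]
      exact Nat.zero_le _

/-- All entries are uniformly bounded when there is no heavy cycle and no barbell. -/
lemma entry_bound_all (hHC : ¬ ∃ q v, T.HeavyCycle q v)
    (hB : ¬ ∃ q q' v, T.Barbell q q' v) :
    ∀ (w : List A) (p q : T.Q), T.μW w p q ≤ T.bnd (Fintype.card T.Q) := by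
  classical
  intro w p q
  exact T.entry_bound hHC hB (Fintype.card T.Q) p q w (Finset.card_le_univ _)

end NAut

namespace NAut
variable {A : Type} (T : NAut A)

def lpow (v : List A) : ℕ → List A
  | 0 => []
  | n+1 => v ++ lpow v n

lemma pow_diag {q : T.Q} {v : List A} (h : 1 ≤ T.μW v q q) :
    ∀ n, 1 ≤ T.μW (lpow v n) q q := by
  intro n
  induction n with
  | zero => simp [lpow, μW, matId]
  | succ n ih =>
    show 1 ≤ T.μW (v ++ lpow v n) q q
    calc 1 = 1 * 1 := rfl
    _ ≤ T.μW v q q * T.μW (lpow v n) q q := Nat.mul_le_mul h ih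
    _ ≤ _ := T.entry_append_ge _ _ _ _ _

lemma pow_heavy {q : T.Q} {v : List A} (h : 2 ≤ T.μW v q q) :
    ∀ n, 2 ^ n ≤ T.μW (lpow v n) q q := by
  intro n
  induction n with
  | zero => simp [lpow, μW, matId]
  | succ n ih =>
    show 2 ^ (n+1) ≤ T.μW (v ++ lpow v n) q q
    calc 2 ^ (n+1) = 2 * 2 ^ n := by ring
    _ ≤ T.μW v q q * T.μW (lpow v n) q q := Nat.mul_le_mul h ih
    _ ≤ _ := T.entry_append_ge _ _ _ _ _

lemma entry_append_two {u v : List A} {i x y j : T.Q} (hxy : x ≠ y) :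
    T.μW u i x * T.μW v x j + T.μW u i y * T.μW v y j ≤ T.μW (u ++ v) i j := by
  rw [μW_append]
  show _ ≤ matMul _ _ i j
  unfold matMul
  calc _ = ∑ z ∈ ({x, y} : Finset T.Q), T.μW u i z * T.μW v z j :=
    (Finset.sum_pair hxy).symm
  _ ≤ _ := Finset.sum_le_sum_of_subset (Finset.subset_univ _)

lemma pow_barbell {q q' : T.Q} {v : List A} (hb : T.Barbell q q' v) :
    ∀ n, n ≤ T.μW (lpow v n) q q' := by
  obtain ⟨hne, _, hqq, hqq', hq'q'⟩ := hb
  intro n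
  induction n with
  | zero => exact Nat.zero_le _
  | succ n ih =>
    show n + 1 ≤ T.μW (v ++ lpow v n) q q'
    calc n + 1 = 1 * n + 1 * 1 := by ring
    _ ≤ T.μW v q q * T.μW (lpow v n) q q' +
        T.μW v q q' * T.μW (lpow v n) q' q' :=
      Nat.add_le_add (Nat.mul_le_mul hqq ih) (Nat.mul_le_mul hqq' (T.pow_diag hq'q' n))
    _ ≤ _ := T.entry_append_two hne

lemma vecMat_matMul {Q : Type} [Fintype Q] (v : Q → ℕ) (M N : Q → Q → ℕ) :
    vecMat v (matMul M N) = vecMat (vecMat v M) N := by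
  funext j
  simp only [vecMat, matMul, Finset.mul_sum, Finset.sum_mul, mul_assoc]
  exact Finset.sum_comm

lemma dotProd_vecMat {Q : Type} [Fintype Q] (c : Q → ℕ) (N : Q → Q → ℕ) (β : Q → ℕ) :
    dotProd (vecMat c N) β = dotProd c (matVec N β) := by
  simp only [dotProd, vecMat, matVec, Finset.mul_sum, Finset.sum_mul, mul_assoc]
  exact Finset.sum_comm

lemma dotProd_ge {Q : Type} [Fintype Q] (c b : Q → ℕ) (y : Q) :
    c y * b y ≤ dotProd c b :=
  Finset.single_le_sum (f := fun z => c z * b z) (fun _ _ => Nat.zero_le _)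
    (Finset.mem_univ y)

lemma vecMat_ge {Q : Type} [Fintype Q] (c : Q → ℕ) (M : Q → Q → ℕ) (x j : Q) :
    c x * M x j ≤ vecMat c M j :=
  Finset.single_le_sum (f := fun z => c z * M z j) (fun _ _ => Nat.zero_le _)
    (Finset.mem_univ x)

lemma g_ge (u x u' : List A) (q q' : T.Q) :
    vecMat T.α (T.μW u) q * T.μW x q q' * matVec (T.μW u') T.β q' ≤
      T.g (u ++ (x ++ u')) := by
  unfold g
  rw [μW_append, μW_append, vecMat_matMul, vecMat_matMul, dotProd_vecMat]
  calc vecMat T.α (T.μW u) q * T.μW x q q' * matVec (T.μW u') T.β q'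
      ≤ vecMat (vecMat T.α (T.μW u)) (T.μW x) q' * matVec (T.μW u') T.β q' :=
        Nat.mul_le_mul_right _ (vecMat_ge _ _ q q')
  _ ≤ _ := dotProd_ge _ _ q'

end NAut


theorem stmt8 {A : Type} [Fintype A] (T : NAut A) (hT : T.Trim) :
    (∃ C : ℕ, ∀ w, T.g w ≤ C) ↔
      ((¬ ∃ q v, T.HeavyCycle q v) ∧ ¬ ∃ q q' v, T.Barbell q q' v) := by
  constructor
  · rintro ⟨C, hC⟩
    constructor
    · rintro ⟨q, v, hne, h2⟩
      obtain ⟨⟨u, hu⟩, ⟨u', hu'⟩⟩ := hT q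
      have hg := T.g_ge u (NAut.lpow v (C+1)) u' q q
      have hpow := T.pow_heavy h2 (C+1)
      have h1 : 2 ^ (C+1) ≤ T.g (u ++ (NAut.lpow v (C+1) ++ u')) := by
        refine le_trans ?_ hg
        calc 2 ^ (C+1) = 1 * 2 ^ (C+1) * 1 := by ring
        _ ≤ _ := Nat.mul_le_mul (Nat.mul_le_mul hu hpow) hu'
      have h2C : C < 2 ^ (C+1) := lt_of_lt_of_le (Nat.lt_two_pow_self (n := C))
        (Nat.pow_le_pow_right (by omega) (by omega))
      have := hC (u ++ (NAut.lpow v (C+1) ++ u'))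
      omega
    · rintro ⟨q, q', v, hbb⟩
      obtain ⟨⟨u, hu⟩, _⟩ := hT q
      obtain ⟨_, ⟨u', hu'⟩⟩ := hT q'
      have hg := T.g_ge u (NAut.lpow v (C+1)) u' q q'
      have hpow := T.pow_barbell hbb (C+1)
      have h1 : C + 1 ≤ T.g (u ++ (NAut.lpow v (C+1) ++ u')) := by
        refine le_trans ?_ hg
        calc C + 1 = 1 * (C+1) * 1 := by ring
        _ ≤ _ := Nat.mul_le_mul (Nat.mul_le_mul hu hpow) hu'
      have := hC (u ++ (NAut.lpow v (C+1) ++ u'))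
      omega
  · rintro ⟨hHC, hB⟩
    refine ⟨(∑ y : T.Q, T.α y) * T.bnd (Fintype.card T.Q) * (∑ x : T.Q, T.β x), ?_⟩
    intro w
    have hent := T.entry_bound_all hHC hB w
    calc T.g w = ∑ x : T.Q, (∑ y : T.Q, T.α y * T.μW w y x) * T.β x := rfl
    _ ≤ ∑ x : T.Q, (∑ y : T.Q, T.α y * T.bnd (Fintype.card T.Q)) * T.β x := by
        apply Finset.sum_le_sum
        intro x _
        apply Nat.mul_le_mul_right
        apply Finset.sum_le_sum
        intro y _
        exact Nat.mul_le_mul_left _ (hent y x)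
    _ = (∑ y : T.Q, T.α y) * T.bnd (Fintype.card T.Q) * (∑ x : T.Q, T.β x) := by
        rw [← Finset.sum_mul, ← Finset.mul_sum]
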